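/- Let (A,·,∘,⁻,0,1) be a de Morgan algebra. Define p(a,b,c) = (b̄·a)∘(a·c)∘(b·c). Then (A,p,0,1) satisfies axioms (T1)–(T4): p(0,a,1)=a; p(a,0,b)=a=p(b,1,a); p(a,b,a)=a; and p(a,p(b1,b2,b3),c)=p(p(a,b1,c),b2,p(a,b3,c)). Moreover p(0,a,b)=p(0,b,a) and p(0,a,a)=a. -/

import Mathlib

set_option maxHeartbeats 1000000 in
theorem key0 {A : Type*} [DistribLattice A] (a c u ub v vb xb y : A) :
    (((vb ⊔ xb) ⊓ (vb ⊔ ub)) ⊓ (ub ⊔ y)) ⊓ a ⊔ (a ⊓ c ⊔ (xb ⊓ u ⊔ (u ⊓ v ⊔ y ⊓ v)) ⊓ c)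
    = xb ⊓ (ub ⊓ a ⊔ (a ⊓ c ⊔ u ⊓ c)) ⊔
      ((ub ⊓ a ⊔ (a ⊓ c ⊔ u ⊓ c)) ⊓ (vb ⊓ a ⊔ (a ⊓ c ⊔ v ⊓ c)) ⊔
        y ⊓ (vb ⊓ a ⊔ (a ⊓ c ⊔ v ⊓ c))) := by
  refine le_antisymm ?_ ?_
  all_goals simp only [inf_sup_left, inf_sup_right, sup_assoc, sup_le_iff]
  all_goals repeat' apply And.intro
  all_goals repeat
    first
    | (apply le_sup_of_le_left
       (repeat' apply le_inf) <;>
         solve_by_elim (maxDepth := 8) only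
           [inf_le_of_left_le, inf_le_of_right_le, le_refl])
    | apply le_sup_of_le_right
    | ((repeat' apply le_inf) <;>
         solve_by_elim (maxDepth := 8) only
           [inf_le_of_left_le, inf_le_of_right_le, le_refl])

theorem stmt_16 {A : Type*} (mul circ : A → A → A) (bar : A → A) (z o : A)
    (mul_comm : ∀ a b, mul a b = mul b a)
    (circ_comm : ∀ a b, circ a b = circ b a)
    (mul_assoc : ∀ a b c, mul (mul a b) c = mul a (mul b c))
    (circ_assoc : ∀ a b c, circ (circ a b) c = circ a (circ b c))
    (absorb1 : ∀ a b, circ a (mul a b) = a)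
    (absorb2 : ∀ a b, mul a (circ a b) = a)
    (distrib1 : ∀ a b c, mul a (circ b c) = circ (mul a b) (mul a c))
    (distrib2 : ∀ a b c, circ a (mul b c) = mul (circ a b) (circ a c))
    (mul_top : ∀ a, mul a o = a) (circ_bot : ∀ a, circ a z = a)
    (mul_bot : ∀ a, mul a z = z) (circ_top : ∀ a, circ a o = o)
    (invol : ∀ a, bar (bar a) = a)
    (deMorgan : ∀ a b, bar (mul a b) = circ (bar b) (bar a))
    (p : A → A → A → A)
    (hp : ∀ a b c, p a b c = circ (mul (bar b) a) (circ (mul a c) (mul b c))) :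
    (∀ a, p z a o = a) ∧
    (∀ a b, p a z b = a) ∧ (∀ a b, p b o a = a) ∧
    (∀ a b, p a b a = a) ∧
    (∀ a b₁ b₂ b₃ c, p a (p b₁ b₂ b₃) c = p (p a b₁ c) b₂ (p a b₃ c)) ∧
    (∀ a b, p z a b = p z b a) ∧ (∀ a, p z a a = a) := by
  have mul_bot' : ∀ a, mul z a = z := fun a => (mul_comm z a).trans (mul_bot a)
  have mul_top' : ∀ a, mul o a = a := fun a => (mul_comm o a).trans (mul_top a)
  have circ_bot' : ∀ a, circ z a = a := fun a => (circ_comm z a).trans (circ_bot a)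
  have bar_z : bar z = o := by
    have h := deMorgan (bar o) z
    rw [mul_bot, invol, circ_top] at h
    exact h
  have bar_o : bar o = z := by rw [← bar_z, invol]
  have mul_idem : ∀ a, mul a a = a := by
    intro a
    have h := absorb2 a (mul a a)
    rw [absorb1] at h
    exact h
  have deMorgan_circ : ∀ a b, bar (circ a b) = mul (bar b) (bar a) := by
    intro a b
    conv_lhs => rw [← invol a, ← invol b, ← deMorgan, invol]
  refine ⟨?_, ?_, ?_, ?_, ?_, ?_, ?_⟩
  · intro a
    rw [hp, mul_bot, circ_bot', mul_bot', circ_bot', mul_top]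
  · intro a b
    rw [hp, bar_z, mul_top', mul_bot', circ_bot, absorb1]
  · intro a b
    rw [hp, bar_o, mul_bot', circ_bot', mul_top', mul_comm b a, circ_comm, absorb1]
  · intro a b
    rw [hp, mul_idem, mul_comm b a, absorb1, circ_comm, mul_comm, absorb1]
  · intro a b₁ b₂ b₃ c
    letI : Max A := ⟨circ⟩
    letI : Min A := ⟨mul⟩
    letI instL : Lattice A := Lattice.mk' circ_comm circ_assoc mul_comm mul_assoc
      absorb1 absorb2
    letI : DistribLattice A := { instL with le_sup_inf := fun x y z => le_of_eq (distrib2 x y z).symm }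
    simp only [hp, deMorgan_circ, deMorgan, invol]
    exact key0 a c b₁ (bar b₁) b₃ (bar b₃) (bar b₂) b₂
  · intro a b
    simp only [hp, mul_bot, mul_bot', circ_bot, circ_bot']
    exact mul_comm a b
  · intro a
    simp only [hp, mul_bot, mul_bot', circ_bot, circ_bot']
    exact mul_idem a
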